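/- With the mapped graph G' constructed from matchings M and M_opt of an SPA-ST instance as before: if a clone l^{c,r} has an M'-edge to student s_i with (s_i,p_j) ∈ M, and l^{c,r} also has an M'_opt-edge to a student s_{i'} whose project in M_opt is not p_j, then |M(p_j)| > |M_opt(p_j)|; in particular p_j is undersubscribed in M_opt. -/

import Mathlib

open scoped Classical
open Finset

/-- An instance of the Student-Project Allocation problem with lecturer
preferences over students, with ties (SPA-ST).  Preferences are encoded by
rank functions: a lower rank means more preferred; equal ranks encode ties. -/
structure SPAST (S P L : Type) where
  /-- the lecturer offering each project -/
  lec : P → L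
  /-- project capacities -/
  cap : P → ℕ
  /-- lecturer capacities -/
  dcap : L → ℕ
  /-- `acc s p` iff student `s` finds project `p` acceptable -/
  acc : S → P → Prop
  /-- student rank function (lower is better); meaningful on acceptable projects -/
  sRank : S → P → ℕ
  /-- lecturer rank function over students (lower is better) -/
  lRank : L → S → ℕ

variable {S P L : Type}

/-- students assigned to a project in `M` -/
noncomputable def projAssignees [Fintype S] (M : S → Option P) (p : P) : Finset S :=
  Finset.univ.filter (fun s => M s = some p)

/-- students assigned to some project of lecturer `k` in `M` -/
noncomputable def lecAssignees [Fintype S] (I : SPAST S P L) (M : S → Option P) (k : L) :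
    Finset S :=
  Finset.univ.filter (fun s => ∃ p, M s = some p ∧ I.lec p = k)

def IsMatching [Fintype S] (I : SPAST S P L) (M : S → Option P) : Prop :=
  (∀ s p, M s = some p → I.acc s p) ∧
  (∀ p, (projAssignees M p).card ≤ I.cap p) ∧
  (∀ k, (lecAssignees I M k).card ≤ I.dcap k)

def ProjFull [Fintype S] (I : SPAST S P L) (M : S → Option P) (p : P) : Prop :=
  (projAssignees M p).card = I.cap p

def LecFull [Fintype S] (I : SPAST S P L) (M : S → Option P) (k : L) : Prop :=
  (lecAssignees I M k).card = I.dcap k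

/-- `s` finds `p` acceptable and is unassigned or strictly prefers `p` to `M(s)`. -/
def WantsToMove (I : SPAST S P L) (M : S → Option P) (s : S) (p : P) : Prop :=
  I.acc s p ∧ (M s = none ∨ ∃ p', M s = some p' ∧ I.sRank s p < I.sRank s p')

/-- `(s, p)` is a blocking pair of `M`. -/
def Blocks [Fintype S] (I : SPAST S P L) (M : S → Option P) (s : S) (p : P) : Prop :=
  WantsToMove I M s p ∧
  ( (¬ ProjFull I M p ∧ ¬ LecFull I M (I.lec p)) ∨
    (¬ ProjFull I M p ∧ LecFull I M (I.lec p) ∧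
      (s ∈ lecAssignees I M (I.lec p) ∨
       ∃ s' ∈ lecAssignees I M (I.lec p), I.lRank (I.lec p) s < I.lRank (I.lec p) s')) ∨
    (ProjFull I M p ∧
       ∃ s' ∈ projAssignees M p, I.lRank (I.lec p) s < I.lRank (I.lec p) s') )

def Stable [Fintype S] (I : SPAST S P L) (M : S → Option P) : Prop :=
  IsMatching I M ∧ ∀ s p, ¬ Blocks I M s p

/-- the number of assigned agents in a matching -/
noncomputable def msize {A B : Type} [Fintype A] (M : A → Option B) : ℕ :=
  (Finset.univ.filter (fun a => (M a).isSome)).card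

/-- With the mapped graph `G'` constructed from matchings `M`
and `Mopt` of an SPA-ST instance as before (clones `C`, edge assignments `E` for
`M \ Mopt` and `Eopt` for `Mopt \ M`, with maximal same-project pairing): if a
clone `c` carries an `E`-edge to `si` with `(si, pj) ∈ M` and also an
`Eopt`-edge to a student whose `Mopt`-project is not `pj`, then
`|Mopt(pj)| < |M(pj)|`; in particular `pj` is undersubscribed in `Mopt`. -/
theorem stmt14 {C : Type} [Fintype S] [Fintype P] [Fintype C]
    (I : SPAST S P L) (M Mopt : S → Option P)
    (hM : IsMatching I M) (hMopt : IsMatching I Mopt)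
    (toLec : C → L)
    (hcount : ∀ k, (Finset.univ.filter (fun c => toLec c = k)).card =
      I.dcap k - ((lecAssignees I M k) ∩ (lecAssignees I Mopt k)).card)
    (Eopt E : S → Option C)
    (hEoptDom : ∀ s, (Eopt s).isSome ↔ ∃ p, Mopt s = some p ∧ M s ≠ some p)
    (hEoptLec : ∀ s c p, Eopt s = some c → Mopt s = some p → toLec c = I.lec p)
    (hEoptInj : ∀ s s' c, Eopt s = some c → Eopt s' = some c → s = s')
    (hEDom : ∀ s, (E s).isSome ↔ ∃ p, M s = some p ∧ Mopt s ≠ some p)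
    (hELec : ∀ s c p, E s = some c → M s = some p → toLec c = I.lec p)
    (hEInj : ∀ s s' c, E s = some c → E s' = some c → s = s')
    (hpair : ∀ p : P,
      (Finset.univ.filter (fun c => ∃ s s', Eopt s = some c ∧ Mopt s = some p ∧
          E s' = some c ∧ M s' = some p)).card =
        min (Finset.univ.filter (fun s => Mopt s = some p ∧ M s ≠ some p)).card
            (Finset.univ.filter (fun s => M s = some p ∧ Mopt s ≠ some p)).card)
    (c : C) (si : S) (pj : P)
    (h1 : E si = some c) (h2 : M si = some pj)
    (h3 : ∃ s', Eopt s' = some c ∧ Mopt s' ≠ some pj) :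
    (projAssignees Mopt pj).card < (projAssignees M pj).card ∧
    (projAssignees Mopt pj).card < I.cap pj := by
  classical
  set A := Finset.univ.filter (fun s => Mopt s = some pj ∧ M s ≠ some pj) with hA
  set B := Finset.univ.filter (fun s => M s = some pj ∧ Mopt s ≠ some pj) with hB
  set D := Finset.univ.filter (fun s => M s = some pj ∧ Mopt s = some pj) with hD
  set Pc := Finset.univ.filter (fun c' : C => ∃ s s', Eopt s = some c' ∧ Mopt s = some pj ∧
      E s' = some c' ∧ M s' = some pj) with hPc
  -- si ∈ B
  have hsiMopt : Mopt si ≠ some pj := by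
    obtain ⟨p, hp1, hp2⟩ := (hEDom si).mp (by rw [h1]; exact rfl)
    rw [h2] at hp1
    cases hp1
    exact hp2
  have hsiB : si ∈ B := by simp [hB, h2, hsiMopt]
  -- c is not a paired clone for pj
  have hcnot : c ∉ Pc := by
    intro hc
    simp only [hPc, Finset.mem_filter] at hc
    obtain ⟨-, s, s', hs1, hs2, -, -⟩ := hc
    obtain ⟨s0, hs0, hs0n⟩ := h3
    have hss0 := hEoptInj s s0 c hs1 hs0
    subst hss0
    exact hs0n hs2
  -- each paired clone yields a distinct member of B other than si
  have hcard : Pc.card ≤ (B.erase si).card := by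
    apply Finset.card_le_card_of_injOn
      (fun c' => if h : ∃ s', E s' = some c' ∧ M s' = some pj then h.choose else si)
    · intro c' hc'Pc
      have hc' := hc'Pc
      simp only [hPc, Finset.mem_coe, Finset.mem_filter] at hc'
      obtain ⟨-, s, s', hs1, hs2, hs3, hs4⟩ := hc'
      have hex : ∃ s', E s' = some c' ∧ M s' = some pj := ⟨s', hs3, hs4⟩
      beta_reduce
      rw [dif_pos hex]
      obtain ⟨hE', hM'⟩ := hex.choose_spec
      have hopt : Mopt hex.choose ≠ some pj := by
        obtain ⟨p, hp1, hp2⟩ := (hEDom hex.choose).mp (by rw [hE']; exact rfl)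
        rw [hM'] at hp1
        cases hp1
        exact hp2
      have hne : hex.choose ≠ si := by
        intro h
        rw [h, h1] at hE'
        have : c' = c := (Option.some.inj hE').symm
        rw [this] at hc'Pc
        exact hcnot hc'Pc
      rw [Finset.mem_coe, Finset.mem_erase]
      exact ⟨hne, by simp [hB, hM', hopt]⟩
    · intro c1 h1c c2 h2c heq
      obtain ⟨-, s, s', hs1, hs2, hs3, hs4⟩ := Finset.mem_filter.mp h1c
      obtain ⟨-, t, t', ht1, ht2, ht3, ht4⟩ := Finset.mem_filter.mp h2c
      have hex1 : ∃ u, E u = some c1 ∧ M u = some pj := ⟨s', hs3, hs4⟩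
      have hex2 : ∃ u, E u = some c2 ∧ M u = some pj := ⟨t', ht3, ht4⟩
      simp only [dif_pos hex1, dif_pos hex2] at heq
      have e1 := hex1.choose_spec.1
      have e2 := hex2.choose_spec.1
      rw [heq, e2] at e1
      exact (Option.some.inj e1).symm
  -- |A| < |B|
  have hAB : A.card < B.card := by
    have hB1 : 1 ≤ B.card := Finset.card_pos.mpr ⟨si, hsiB⟩
    have herase : (B.erase si).card = B.card - 1 := Finset.card_erase_of_mem hsiB
    have hminlt : min A.card B.card < B.card := by
      have := hpair pj
      rw [← hA, ← hB] at this
      rw [← hPc] at this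
      omega
    by_contra hcon
    push_neg at hcon
    rw [min_eq_right hcon] at hminlt
    omega
  -- cardinality splits
  have eM : (projAssignees M pj).card = B.card + D.card := by
    have := Finset.card_filter_add_card_filter_not
      (s := projAssignees M pj) (p := fun s => Mopt s = some pj)
    have h1' : (projAssignees M pj).filter (fun s => Mopt s = some pj) = D := by
      ext s
      simp [projAssignees, hD, and_comm]
    have h2' : (projAssignees M pj).filter (fun s => ¬ Mopt s = some pj) = B := by
      ext s
      simp [projAssignees, hB]
    rw [h1', h2'] at this
    omega
  have eMopt : (projAssignees Mopt pj).card = A.card + D.card := by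
    have := Finset.card_filter_add_card_filter_not
      (s := projAssignees Mopt pj) (p := fun s => M s = some pj)
    have h1' : (projAssignees Mopt pj).filter (fun s => M s = some pj) = D := by
      ext s
      simp [projAssignees, hD, and_comm]
    have h2' : (projAssignees Mopt pj).filter (fun s => ¬ M s = some pj) = A := by
      ext s
      simp [projAssignees, hA]
    rw [h1', h2'] at this
    omega
  have hlt : (projAssignees Mopt pj).card < (projAssignees M pj).card := by
    rw [eM, eMopt]; omega
  exact ⟨hlt, lt_of_lt_of_le hlt (hM.2.1 pj)⟩
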